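/- For every real a > 0 and every real c, the improper integral lim_{R→∞} ∫_{−R}^{R} exp(−(i a x²)/2 + i c x) dx exists and equals √(2π/a) · exp(−iπ/4) · exp(i c²/(2a)). -/

import Mathlib

open Filter Real Complex intervalIntegral MeasureTheory Set

namespace FresnelAux

lemma norm_g (ε a c x : ℝ) :
    ‖Complex.exp (-((ε + Complex.I * a) / 2) * x ^ 2 + Complex.I * c * x)‖
      = Real.exp (-(ε * x ^ 2) / 2) := by
  have h : -((ε + Complex.I * a) / 2) * (x : ℂ) ^ 2 + Complex.I * c * x
      = ((-(ε * x ^ 2) / 2 : ℝ) : ℂ) + ((-(a * x ^ 2) / 2 + c * x : ℝ) : ℂ) * Complex.I := by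
    push_cast; ring
  rw [Complex.norm_exp, h]
  simp [← Complex.ofReal_pow]

lemma norm_g_le_one (ε a c x : ℝ) (hε : 0 ≤ ε) :
    ‖Complex.exp (-((ε + Complex.I * a) / 2) * x ^ 2 + Complex.I * c * x)‖ ≤ 1 := by
  rw [norm_g, Real.exp_le_one_iff]
  nlinarith [sq_nonneg x]

lemma tail_bound {a : ℝ} (ha : 0 < a) (c : ℝ) {ε : ℝ} (hε : 0 < ε) (hεa : ε ≤ a)
    {R : ℝ} (hR : (2 * |c| + 2) / a ≤ R) :
    ‖∫ x in Ioi R, Complex.exp (-((ε + Complex.I * a) / 2) * x ^ 2 + Complex.I * c * x)‖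
      ≤ 10 / (a * R) := by
  set b : ℂ := ((ε : ℂ) + Complex.I * a) / 2 with hb
  set φ : ℝ → ℂ := fun x => Complex.exp (-b * x ^ 2 + Complex.I * c * x) with hφ
  set l : ℝ → ℂ := fun x => -2 * b * x + Complex.I * c with hl
  have hR0 : 0 < R := lt_of_lt_of_le (by positivity) hR
  have hlb : ∀ x : ℝ, R ≤ x → a * x / 2 ≤ ‖l x‖ := by
    intro x hx
    have hlx : l x = ((-(ε * x) : ℝ) : ℂ) + ((-(a * x) + c : ℝ) : ℂ) * Complex.I := by
      rw [hl, hb]; push_cast; ring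
    have him : (l x).im = -(a * x) + c := by rw [hlx]; simp
    have h1 : |(l x).im| ≤ ‖l x‖ := Complex.abs_im_le_norm (l x)
    have hax : 2 * |c| + 2 ≤ a * x := by
      have := (div_le_iff₀ ha).mp (hR.trans hx)
      linarith
    have h2 : a * x / 2 ≤ |(l x).im| := by
      rw [him, show -(a * x) + c = -(a * x - c) by ring, abs_neg]
      have hc := le_abs_self c
      have hd : a * x - c ≤ |a * x - c| := le_abs_self _
      nlinarith
    exact h2.trans h1
  have hlne : ∀ x : ℝ, R ≤ x → l x ≠ 0 := by
    intro x hx h0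
    have := hlb x hx
    rw [h0, norm_zero] at this
    nlinarith
  have hx0 : ∀ x : ℝ, R ≤ x → 0 < x := fun x hx => lt_of_lt_of_le hR0 hx
  have h2b : ‖(2 : ℂ) * b‖ ≤ 2 * a := by
    have h : (2 : ℂ) * b = (ε : ℂ) + Complex.I * a := by rw [hb]; ring
    rw [h]
    calc ‖(ε : ℂ) + Complex.I * a‖ ≤ ‖(ε : ℂ)‖ + ‖Complex.I * (a : ℂ)‖ := norm_add_le _ _
    _ = |ε| + |a| := by simp
    _ ≤ 2 * a := by rw [abs_of_pos hε, abs_of_pos ha]; linarith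
  have hTbound : ∀ T : ℝ, R ≤ T → ‖∫ x in R..T, φ x‖ ≤ 2 / (a * T) + (2 / (a * R) + 8 / (a * R)) := by
    intro T hT
    have hTpos : (0:ℝ) < T := lt_of_lt_of_le hR0 hT
    have huIcc : ∀ x ∈ uIcc R T, R ≤ x := by
      intro x hx
      rw [uIcc_of_le hT] at hx
      exact hx.1
    have hderivφ : ∀ x ∈ uIcc R T, HasDerivAt φ (l x * φ x) x := by
      intro x _
      have h1 : HasDerivAt (fun z : ℂ => -b * z ^ 2 + Complex.I * c * z)
          (-2 * b * x + Complex.I * c) (x : ℂ) := by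
        have hp : HasDerivAt (fun z : ℂ => z ^ 2) (2 * (x:ℂ)) (x : ℂ) := by
          simpa using hasDerivAt_pow 2 (x : ℂ)
        have h2 := (hp.const_mul (-b)).add ((hasDerivAt_id (x:ℂ)).const_mul (Complex.I * c))
        exact h2.congr_deriv (by ring)
      have h2 := h1.comp_ofReal
      have h3 := h2.cexp
      simpa [hφ, hl, mul_comm] using h3
    have hderivu : ∀ x ∈ uIcc R T, HasDerivAt (fun x => (l x)⁻¹) (2 * b / (l x) ^ 2) x := by
      intro x hx
      have h1 : HasDerivAt l (-2 * b) x := by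
        have h0 : HasDerivAt (fun x : ℝ => ((x : ℂ))) 1 x := Complex.ofRealCLM.hasDerivAt
        simpa [hl] using ((h0.const_mul (-2 * b)).add_const (Complex.I * c))
      have h2 := (hasDerivAt_const (x:ℝ) (1:ℂ)).div h1 (hlne x (huIcc x hx))
      have h3 : ((fun _ : ℝ => (1:ℂ)) / l) = fun y : ℝ => (l y)⁻¹ := by
        funext y; rw [Pi.div_apply, one_div]
      rw [h3] at h2
      exact h2.congr_deriv (by ring)
    have hlcont : Continuous l := by
      rw [hl]; fun_prop
    have hφcont : Continuous φ := by
      rw [hφ]; fun_prop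
    have hIntφ' : IntervalIntegrable (fun x => l x * φ x) volume R T :=
      (hlcont.mul hφcont).intervalIntegrable _ _
    have hcontu' : ContinuousOn (fun x => 2 * b / (l x) ^ 2) (uIcc R T) := by
      apply ContinuousOn.div continuousOn_const ((hlcont.pow 2).continuousOn)
      intro x hx
      exact pow_ne_zero _ (hlne x (huIcc x hx))
    have hIntu' : IntervalIntegrable (fun x => 2 * b / (l x) ^ 2) volume R T :=
      hcontu'.intervalIntegrable
    have hIBP := integral_mul_deriv_eq_deriv_mul hderivu hderivφ hIntu' hIntφ'
    have hLHS : ∫ x in R..T, (l x)⁻¹ * (l x * φ x) = ∫ x in R..T, φ x := by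
      apply intervalIntegral.integral_congr
      intro x hx
      field_simp [hlne x (huIcc x hx)]
    rw [hLHS] at hIBP
    rw [hIBP]
    have hnorm_u : ∀ x : ℝ, R ≤ x → ‖(l x)⁻¹‖ ≤ 2 / (a * x) := by
      intro x hx
      have hxp := hx0 x hx
      have hlpos : (0:ℝ) < a * x / 2 := by positivity
      rw [norm_inv, show (2:ℝ) / (a * x) = (a * x / 2)⁻¹ by field_simp]
      exact inv_anti₀ hlpos (hlb x hx)
    have hbd1 : ‖(l T)⁻¹ * φ T‖ ≤ 2 / (a * T) := by
      calc ‖(l T)⁻¹ * φ T‖ = ‖(l T)⁻¹‖ * ‖φ T‖ := norm_mul _ _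
      _ ≤ (2 / (a * T)) * 1 :=
          mul_le_mul (hnorm_u T hT) (norm_g_le_one ε a c T hε.le) (norm_nonneg _)
            (div_pos two_pos (mul_pos ha hTpos)).le
      _ = 2 / (a * T) := mul_one _
    have hbd2 : ‖(l R)⁻¹ * φ R‖ ≤ 2 / (a * R) := by
      calc ‖(l R)⁻¹ * φ R‖ = ‖(l R)⁻¹‖ * ‖φ R‖ := norm_mul _ _
      _ ≤ (2 / (a * R)) * 1 :=
          mul_le_mul (hnorm_u R le_rfl) (norm_g_le_one ε a c R hε.le) (norm_nonneg _)
            (div_pos two_pos (mul_pos ha hR0)).le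
      _ = 2 / (a * R) := mul_one _
    have hbd3 : ‖∫ x in R..T, 2 * b / (l x) ^ 2 * φ x‖ ≤ 8 / (a * R) := by
      have h0not : (0:ℝ) ∉ uIcc R T := by
        rw [uIcc_of_le hT]
        intro h
        exact absurd h.1 (not_le.mpr hR0)
      have hpt : ∀ x ∈ Icc R T, ‖2 * b / (l x) ^ 2 * φ x‖ ≤ (8 / a) * (x : ℝ) ^ (-2 : ℤ) := by
        intro x hx
        have hxR := hx.1
        have hxpos := hx0 x hxR
        have hl2 : (a * x / 2) ^ 2 ≤ ‖l x‖ ^ 2 := by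
          apply pow_le_pow_left₀ (by positivity) (hlb x hxR)
        have hφone : ‖φ x‖ ≤ 1 := norm_g_le_one ε a c x hε.le
        calc ‖2 * b / (l x) ^ 2 * φ x‖ = ‖2 * b‖ / ‖l x‖ ^ 2 * ‖φ x‖ := by
              rw [norm_mul, norm_div, norm_pow]
          _ ≤ (2 * a) / (a * x / 2) ^ 2 * 1 := by
              apply mul_le_mul ?_ hφone (norm_nonneg _) (by positivity)
              exact div_le_div₀ (by positivity) h2b (by positivity) hl2
          _ = (8 / a) * (x : ℝ) ^ (-2 : ℤ) := by
              rw [show ((-2 : ℤ)) = -((2:ℕ) : ℤ) by norm_num, zpow_neg, zpow_natCast]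
              field_simp
              ring
      have hint1 : IntervalIntegrable (fun x => ‖2 * b / (l x) ^ 2 * φ x‖) volume R T :=
        (hcontu'.mul hφcont.continuousOn).norm.intervalIntegrable
      have hint2 : IntervalIntegrable (fun x : ℝ => (8 / a) * (x : ℝ) ^ (-2 : ℤ)) volume R T :=
        (intervalIntegral.intervalIntegrable_zpow (Or.inr h0not)).const_mul _
      calc ‖∫ x in R..T, 2 * b / (l x) ^ 2 * φ x‖
          ≤ ∫ x in R..T, ‖2 * b / (l x) ^ 2 * φ x‖ :=
            intervalIntegral.norm_integral_le_integral_norm hT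
        _ ≤ ∫ x in R..T, (8 / a) * (x : ℝ) ^ (-2 : ℤ) :=
            intervalIntegral.integral_mono_on hT hint1 hint2 hpt
        _ = (8 / a) * ∫ x in R..T, (x : ℝ) ^ (-2 : ℤ) := intervalIntegral.integral_const_mul _ _
        _ ≤ 8 / (a * R) := by
            rw [integral_zpow (Or.inr ⟨by norm_num, h0not⟩)]
            have h1 : (0:ℝ) ≤ T⁻¹ := by positivity
            have h8 : (0:ℝ) < 8 / a := by positivity
            have he : ((T:ℝ) ^ ((-2:ℤ) + 1) - R ^ ((-2:ℤ) + 1)) / (((-2:ℤ):ℝ) + 1) = R⁻¹ - T⁻¹ := by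
              norm_num
              ring
            rw [he]
            calc (8 / a) * (R⁻¹ - T⁻¹) ≤ (8 / a) * R⁻¹ :=
                  mul_le_mul_of_nonneg_left (by linarith) h8.le
              _ = 8 / (a * R) := by field_simp
    calc ‖(l T)⁻¹ * φ T - (l R)⁻¹ * φ R - ∫ x in R..T, 2 * b / (l x) ^ 2 * φ x‖
        ≤ ‖(l T)⁻¹ * φ T - (l R)⁻¹ * φ R‖ + ‖∫ x in R..T, 2 * b / (l x) ^ 2 * φ x‖ :=
          norm_sub_le _ _
      _ ≤ (‖(l T)⁻¹ * φ T‖ + ‖(l R)⁻¹ * φ R‖) + 8 / (a * R) :=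
          add_le_add (norm_sub_le _ _) hbd3
      _ ≤ (2 / (a * T) + 2 / (a * R)) + 8 / (a * R) := by
          gcongr
      _ = 2 / (a * T) + (2 / (a * R) + 8 / (a * R)) := by ring
  have hInt : IntegrableOn φ (Ioi R) volume := by
    have hbre : 0 < b.re := by
      have hh : b.re = ε / 2 := by
        rw [hb, show (ε : ℂ) + Complex.I * a = Complex.ofReal ε + Complex.ofReal a * Complex.I by ring]
        simp
      rw [hh]; positivity
    have h1 := integrable_cexp_quadratic hbre (Complex.I * c) 0
    have h2 : Integrable φ := by simpa [hφ] using h1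
    exact h2.integrableOn
  have hTend : Tendsto (fun T => ∫ x in R..T, φ x) atTop (nhds (∫ x in Ioi R, φ x)) :=
    intervalIntegral_tendsto_integral_Ioi R hInt tendsto_id
  have hgT : Tendsto (fun T : ℝ => 2 / (a * T) + (2 / (a * R) + 8 / (a * R))) atTop
      (nhds (0 + (2 / (a * R) + 8 / (a * R)))) := by
    apply Tendsto.add_const
    exact tendsto_const_nhds.div_atTop (tendsto_id.const_mul_atTop ha)
  have hfin := le_of_tendsto_of_tendsto hTend.norm hgT
    (eventually_atTop.mpr ⟨R, fun T hT => hTbound T hT⟩)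
  calc ‖∫ x in Ioi R, φ x‖ ≤ 0 + (2 / (a * R) + 8 / (a * R)) := hfin
    _ = 10 / (a * R) := by ring

lemma hne {a : ℝ} (ha : 0 < a) (ε : ℝ) : ((ε : ℂ) + Complex.I * a) ≠ 0 := by
  intro h
  have h2 := congrArg Complex.im h
  simp at h2
  exact ha.ne' h2

lemma re_half {ε a : ℝ} : ((((ε : ℂ) + Complex.I * a)) / 2).re = ε / 2 := by
  rw [show (ε : ℂ) + Complex.I * a = Complex.ofReal ε + Complex.ofReal a * Complex.I by ring]
  simp

lemma integral_formula {a : ℝ} (ha : 0 < a) (c : ℝ) {ε : ℝ} (hε : 0 < ε) :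
    ∫ x : ℝ, Complex.exp (-((ε + Complex.I * a) / 2) * x ^ 2 + Complex.I * c * x)
      = (2 * (π : ℂ) / ((ε : ℂ) + Complex.I * a)) ^ (1 / 2 : ℂ)
        * Complex.exp (-(c : ℂ) ^ 2 / (2 * ((ε : ℂ) + Complex.I * a))) := by
  have hb : (-(((ε : ℂ) + Complex.I * a) / 2)).re < 0 := by
    rw [neg_re, re_half]; linarith
  have h := integral_cexp_quadratic hb (Complex.I * c) 0
  have hL : (fun x : ℝ => Complex.exp (-(((ε : ℂ) + Complex.I * a) / 2) * x ^ 2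
      + Complex.I * c * x + 0)) = fun x : ℝ =>
      Complex.exp (-((ε + Complex.I * a) / 2) * x ^ 2 + Complex.I * c * x) := by
    funext x; rw [add_zero]
  rw [hL] at h
  rw [h]
  have hz := hne ha ε
  congr 1
  · congr 1
    rw [neg_neg]
    field_simp
  · congr 1
    have hd : (4 : ℂ) * -((((ε : ℂ) + Complex.I * a)) / 2)
        = -(2 * ((ε : ℂ) + Complex.I * a)) := by ring
    rw [zero_sub, mul_pow, Complex.I_sq, hd, neg_one_mul, neg_div_neg_eq, neg_div]

lemma sqrt_const {r : ℝ} (hr : 0 < r) :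
    ((-(r : ℂ) * Complex.I) : ℂ) ^ (1 / 2 : ℂ)
      = (Real.sqrt r : ℂ) * Complex.exp (-(Complex.I * π) / 4) := by
  have hw : (-(r : ℂ) * Complex.I) ≠ 0 := by
    simp [Complex.ext_iff, hr.ne']
  rw [Complex.cpow_def_of_ne_zero hw]
  have harg : (-(r : ℂ) * Complex.I).arg = -(π / 2) := by
    rw [Complex.arg_eq_neg_pi_div_two_iff]
    constructor <;> simp [hr]
  have habs : ‖(-(r : ℂ) * Complex.I)‖ = r := by
    simp [abs_of_pos hr]
  have hlog : Complex.log (-(r : ℂ) * Complex.I)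
      = (Real.log r : ℂ) + (-(π / 2) : ℝ) * Complex.I := by
    rw [Complex.log, habs, harg]
  rw [hlog]
  have hmul : ((Real.log r : ℂ) + ((-(π / 2) : ℝ) : ℂ) * Complex.I) * (1 / 2 : ℂ)
      = ((Real.log r / 2 : ℝ) : ℂ) + -(Complex.I * π) / 4 := by
    push_cast; ring
  rw [hmul, Complex.exp_add]
  congr 1
  rw [← Complex.ofReal_exp]
  norm_cast
  rw [Real.sqrt_eq_rpow, Real.rpow_def_of_pos hr]
  ring_nf

lemma base_eq {a : ℝ} (ha : 0 < a) :
    (2 * (π : ℂ) / (((0 : ℝ) : ℂ) + Complex.I * a)) = -((2 * π / a : ℝ) : ℂ) * Complex.I := by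
  have h0 : ((0 : ℝ) : ℂ) + Complex.I * a = Complex.I * a := by simp
  rw [h0, div_eq_iff (by simp [Complex.ext_iff, ha.ne'] : Complex.I * (a : ℂ) ≠ 0)]
  push_cast
  have h1 : -(2 * (π:ℂ) / (a:ℂ)) * Complex.I * (Complex.I * a)
      = (2 * (π:ℂ) / (a:ℂ)) * a * (-(Complex.I * Complex.I)) := by ring
  rw [h1, Complex.I_mul_I]
  have haC : (a : ℂ) ≠ 0 := by exact_mod_cast ha.ne'
  field_simp

lemma exp_arg_eq {a : ℝ} (ha : 0 < a) (c : ℝ) :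
    -(c : ℂ) ^ 2 / (2 * (((0 : ℝ) : ℂ) + Complex.I * a)) = Complex.I * c ^ 2 / (2 * a) := by
  have h0 : ((0 : ℝ) : ℂ) + Complex.I * a = Complex.I * a := by simp
  rw [h0]
  have haC : (a : ℂ) ≠ 0 := by exact_mod_cast ha.ne'
  have h1 : (2 : ℂ) * (Complex.I * a) ≠ 0 := by
    simp [Complex.ext_iff, ha.ne']
  have h2 : (2 : ℂ) * a ≠ 0 := by
    simp [haC]
  rw [div_eq_div_iff h1 h2]
  have h3 : Complex.I * (c:ℂ) ^ 2 * (2 * (Complex.I * a))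
      = (2 * (a:ℂ) * c ^ 2) * (Complex.I * Complex.I) := by ring
  rw [h3, Complex.I_mul_I]
  ring
lemma integrable_g {a : ℝ} (ha : 0 < a) (c : ℝ) {ε : ℝ} (hε : 0 < ε) :
    Integrable (fun x : ℝ =>
      Complex.exp (-((ε + Complex.I * a) / 2) * x ^ 2 + Complex.I * c * x)) := by
  have hbre : 0 < ((((ε : ℂ) + Complex.I * a)) / 2).re := by
    rw [re_half]; positivity
  have h1 := integrable_cexp_quadratic hbre (Complex.I * c) 0
  simpa using h1

end FresnelAux

open FresnelAux

/-- Fresnel integral with linear phase: for `a > 0` and `c : ℝ`,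
`lim_{R→∞} ∫_{-R}^{R} exp(-(i a x²)/2 + i c x) dx = √(2π/a) ⬝ exp(-iπ/4) ⬝ exp(i c²/(2a))`. -/
theorem fresnel_integral_linear_phase (a c : ℝ) (ha : 0 < a) :
    Tendsto (fun R : ℝ => ∫ x in (-R)..R,
        Complex.exp (-(Complex.I * a * x ^ 2) / 2 + Complex.I * c * x)) atTop
      (nhds ((Real.sqrt (2 * π / a) : ℂ) * Complex.exp (-(Complex.I * π) / 4) *
        Complex.exp (Complex.I * c ^ 2 / (2 * a)))) := by
  set g : ℝ → ℝ → ℂ := fun ε x =>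
    Complex.exp (-((ε + Complex.I * a) / 2) * x ^ 2 + Complex.I * c * x) with hg
  set Φ : ℝ → ℂ := fun ε => (2 * (π : ℂ) / ((ε : ℂ) + Complex.I * a)) ^ (1 / 2 : ℂ)
    * Complex.exp (-(c : ℂ) ^ 2 / (2 * ((ε : ℂ) + Complex.I * a))) with hΦ
  set e : ℝ → ℝ := fun R => (R ^ 4)⁻¹ with he
  -- rewrite the goal integrand
  have hgoal : (fun R : ℝ => ∫ x in (-R)..R,
      Complex.exp (-(Complex.I * a * x ^ 2) / 2 + Complex.I * c * x))
      = fun R : ℝ => ∫ x in (-R)..R, g 0 x := by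
    funext R
    apply intervalIntegral.integral_congr
    intro x _
    simp only [hg]
    congr 1
    push_cast
    ring
  rw [hgoal]
  -- continuity of Φ at 0
  have hzne : ∀ ε : ℝ, ((ε : ℂ) + Complex.I * a) ≠ 0 := hne ha
  have hbcont : Continuous (fun ε : ℝ => (ε : ℂ) + Complex.I * a) := by fun_prop
  have hΦcont : ContinuousAt Φ 0 := by
    have h1 : ContinuousAt (fun ε : ℝ => 2 * (π : ℂ) / ((ε : ℂ) + Complex.I * a)) 0 :=
      (continuous_const.div hbcont hzne).continuousAt
    have h2 : ContinuousAt (fun z : ℂ => z ^ (1 / 2 : ℂ))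
        (2 * (π : ℂ) / (((0:ℝ) : ℂ) + Complex.I * a)) := by
      apply continuousAt_cpow_const
      rw [Complex.mem_slitPlane_iff]
      right
      rw [base_eq ha]
      simp [Real.pi_pos.ne', ha.ne']
    have h3 : ContinuousAt (fun ε : ℝ =>
        (2 * (π : ℂ) / ((ε : ℂ) + Complex.I * a)) ^ (1 / 2 : ℂ)) 0 :=
      ContinuousAt.comp (g := fun z : ℂ => z ^ (1 / 2 : ℂ))
        (f := fun ε : ℝ => 2 * (π : ℂ) / ((ε : ℂ) + Complex.I * a)) h2 h1
    have h4 : ContinuousAt (fun ε : ℝ =>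
        Complex.exp (-(c : ℂ) ^ 2 / (2 * ((ε : ℂ) + Complex.I * a)))) 0 := by
      apply Complex.continuous_exp.continuousAt.comp
      apply ContinuousAt.div continuousAt_const (continuous_const.mul hbcont).continuousAt
      exact mul_ne_zero two_ne_zero (hzne 0)
    exact h3.mul h4
  have he0 : Tendsto e atTop (nhds 0) := by
    apply Tendsto.comp tendsto_inv_atTop_zero
    exact tendsto_pow_atTop (by norm_num)
  have hΦlim : Tendsto (fun R => Φ (e R)) atTop (nhds (Φ 0)) := hΦcont.tendsto.comp he0
  -- eventual bound on the difference
  have hdiff : ∀ᶠ R in atTop, ‖(∫ x in (-R)..R, g 0 x) - Φ (e R)‖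
      ≤ 1 / R + (10 / (a * R) + 10 / (a * R)) := by
    filter_upwards [eventually_ge_atTop (1 : ℝ),
      eventually_ge_atTop ((2 * |c| + 2) / a), he0.eventually_lt_const ha] with R hR1 hR2 hRa
    have hR0 : (0 : ℝ) < R := lt_of_lt_of_le one_pos hR1
    set ε : ℝ := e R with hε'
    have hε : 0 < ε := by rw [hε', he]; positivity
    have hεa : ε ≤ a := hRa.le
    have hRR : -R ≤ R := by linarith
    have hI : Integrable (g ε) := integrable_g ha c hε
    -- splitting
    have e2 : ∫ x in Ioi (-R), g ε x
        = (∫ x in Ioc (-R) R, g ε x) + ∫ x in Ioi R, g ε x := by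
      rw [← Ioc_union_Ioi_eq_Ioi hRR]
      apply setIntegral_union _ measurableSet_Ioi hI.integrableOn hI.integrableOn
      rw [Set.disjoint_left]
      intro x hx hx'
      exact absurd hx.2 (not_le.mpr hx')
    have hsplit : Φ ε = (∫ x in Iic (-R), g ε x)
        + ((∫ x in Ioc (-R) R, g ε x) + ∫ x in Ioi R, g ε x) := by
      have hform := integral_formula ha c hε
      calc Φ ε = ∫ x : ℝ, g ε x := by
            simp only [hΦ, hg]
            exact hform.symm
        _ = (∫ x in Iic (-R), g ε x) + ∫ x in Ioi (-R), g ε x :=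
            (integral_Iic_add_Ioi hI.integrableOn hI.integrableOn).symm
        _ = _ := by rw [e2]
    have e3 : ∫ x in (-R)..R, g ε x = ∫ x in Ioc (-R) R, g ε x :=
      intervalIntegral.integral_of_le hRR
    -- tail bounds
    have hT1 : ‖∫ x in Ioi R, g ε x‖ ≤ 10 / (a * R) := tail_bound ha c hε hεa hR2
    have hT2 : ‖∫ x in Iic (-R), g ε x‖ ≤ 10 / (a * R) := by
      rw [← integral_comp_neg_Ioi]
      have hfun : (fun x : ℝ => g ε (-x)) = fun x : ℝ =>
          Complex.exp (-((ε + Complex.I * a) / 2) * x ^ 2 + Complex.I * (-c : ℝ) * x) := by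
        funext x
        simp only [hg]
        congr 1
        push_cast
        ring
      rw [hfun]
      have hR2' : (2 * |(-c)| + 2) / a ≤ R := by rwa [abs_neg]
      exact tail_bound ha (-c) hε hεa hR2'
    -- middle bound
    have hM : ‖∫ x in (-R)..R, (g 0 x - g ε x)‖ ≤ 1 / R := by
      have hbound : ∀ x ∈ Set.Ioc (min (-R) R) (max (-R) R),
          ‖g 0 x - g ε x‖ ≤ ε * R ^ 2 / 2 := by
        intro x hx
        rw [min_eq_left hRR, max_eq_right hRR] at hx
        have hx2 : x ^ 2 ≤ R ^ 2 := sq_le_sq' (by linarith [hx.1]) hx.2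
        have hsplitexp : g ε x = Complex.exp ((-(ε * x ^ 2) / 2 : ℝ)) * g 0 x := by
          simp only [hg]
          rw [← Complex.exp_add]
          congr 1
          push_cast
          ring
        have hdiffeq : g 0 x - g ε x
            = ((1 - Real.exp (-(ε * x ^ 2) / 2) : ℝ) : ℂ) * g 0 x := by
          rw [hsplitexp]
          push_cast [Complex.ofReal_exp]
          ring
        rw [hdiffeq, norm_mul]
        have hg0 : ‖g 0 x‖ = 1 := by
          simp only [hg]
          rw [norm_g]
          simp
        rw [hg0, mul_one, Complex.norm_real]
        have ht : -(ε * x ^ 2) / 2 ≤ 0 := by nlinarith [sq_nonneg x]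
        have hle1 : Real.exp (-(ε * x ^ 2) / 2) ≤ 1 := Real.exp_le_one_iff.mpr ht
        have hge := Real.add_one_le_exp (-(ε * x ^ 2) / 2)
        rw [Real.norm_eq_abs, _root_.abs_of_nonneg (by linarith)]
        nlinarith
      have h1 := intervalIntegral.norm_integral_le_of_norm_le_const hbound
      calc ‖∫ x in (-R)..R, (g 0 x - g ε x)‖ ≤ ε * R ^ 2 / 2 * |R - -R| := h1
        _ = 1 / R := by
            simp only [hε', he]
            rw [_root_.abs_of_nonneg (by linarith : (0:ℝ) ≤ R - -R)]
            field_simp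
            ring
    -- combine
    have hint0 : IntervalIntegrable (g 0) volume (-R) R := by
      apply Continuous.intervalIntegrable
      simp only [hg]
      fun_prop
    have hintε : IntervalIntegrable (g ε) volume (-R) R := by
      apply Continuous.intervalIntegrable
      simp only [hg]
      fun_prop
    have hsub : ∫ x in (-R)..R, (g 0 x - g ε x)
        = (∫ x in (-R)..R, g 0 x) - ∫ x in (-R)..R, g ε x :=
      intervalIntegral.integral_sub hint0 hintε
    have hkey : (∫ x in (-R)..R, g 0 x) - Φ ε
        = (∫ x in (-R)..R, (g 0 x - g ε x)) - (∫ x in Iic (-R), g ε x)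
          - ∫ x in Ioi R, g ε x := by
      rw [hsub, hsplit, ← e3]
      ring
    rw [hkey]
    calc ‖(∫ x in (-R)..R, (g 0 x - g ε x)) - (∫ x in Iic (-R), g ε x)
          - ∫ x in Ioi R, g ε x‖
        ≤ ‖(∫ x in (-R)..R, (g 0 x - g ε x)) - (∫ x in Iic (-R), g ε x)‖
          + ‖∫ x in Ioi R, g ε x‖ := norm_sub_le _ _
      _ ≤ (‖∫ x in (-R)..R, (g 0 x - g ε x)‖ + ‖∫ x in Iic (-R), g ε x‖)
          + ‖∫ x in Ioi R, g ε x‖ := by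
          gcongr
          exact norm_sub_le _ _
      _ ≤ (1 / R + 10 / (a * R)) + 10 / (a * R) := by
          gcongr
      _ = 1 / R + (10 / (a * R) + 10 / (a * R)) := by ring
  -- squeeze
  have hB : Tendsto (fun R : ℝ => 1 / R + (10 / (a * R) + 10 / (a * R))) atTop
      (nhds (0 + (0 + 0))) := by
    have h1 : Tendsto (fun R : ℝ => 1 / R) atTop (nhds 0) :=
      tendsto_const_nhds.div_atTop tendsto_id
    have h2 : Tendsto (fun R : ℝ => 10 / (a * R)) atTop (nhds 0) :=
      tendsto_const_nhds.div_atTop (tendsto_id.const_mul_atTop ha)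
    exact h1.add (h2.add h2)
  rw [show (0:ℝ) + (0 + 0) = 0 by ring] at hB
  have hzero : Tendsto (fun R => (∫ x in (-R)..R, g 0 x) - Φ (e R)) atTop (nhds 0) :=
    squeeze_zero_norm' hdiff hB
  have hfinal : Tendsto (fun R => ((∫ x in (-R)..R, g 0 x) - Φ (e R)) + Φ (e R)) atTop
      (nhds (0 + Φ 0)) := hzero.add hΦlim
  simp only [sub_add_cancel, zero_add] at hfinal
  have hΦ0 : Φ 0 = (Real.sqrt (2 * π / a) : ℂ) * Complex.exp (-(Complex.I * π) / 4) *
      Complex.exp (Complex.I * c ^ 2 / (2 * a)) := by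
    simp only [hΦ]
    show (2 * (π : ℂ) / (((0:ℝ) : ℂ) + Complex.I * a)) ^ (1 / 2 : ℂ)
        * Complex.exp (-(c : ℂ) ^ 2 / (2 * (((0:ℝ) : ℂ) + Complex.I * a))) = _
    rw [base_eq ha, exp_arg_eq ha c, sqrt_const (by positivity : (0:ℝ) < 2 * π / a)]
  rwa [hΦ0] at hfinal
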